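/- Let S be a Steiner system S(5,8,24) on a 24-element set Ω, let ∞, 0, 1 ∈ Ω be distinct points, and let K₀ ∈ S be an octad with 0 ∈ K₀ and ∞ ∉ K₀, 1 ∉ K₀. Then the number of octads K ∈ S satisfying 0 ∈ K, 1 ∈ K, ∞ ∉ K and |K ∩ K₀| = 2 is exactly 28. -/

import Mathlib

/-- A Steiner system `S(5,8,24)`: `Ω` has 24 elements, every block (octad) has 8
elements, and every 5-element subset of `Ω` is contained in exactly one octad. -/
def IsSteinerSystem_5_8_24 {Ω : Type*} [Fintype Ω] [DecidableEq Ω]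
    (S : Finset (Finset Ω)) : Prop :=
  Fintype.card Ω = 24 ∧
  (∀ K ∈ S, K.card = 8) ∧
  ∀ A : Finset Ω, A.card = 5 → ∃! K, K ∈ S ∧ A ⊆ K

namespace SteinerAux5824

/-- Number of octads containing a fixed `i`-set. -/
def lam : ℕ → ℕ
  | 0 => 759
  | 1 => 253
  | 2 => 77
  | 3 => 21
  | 4 => 5
  | _ => 1

variable {Ω : Type*} [Fintype Ω] [DecidableEq Ω] {S : Finset (Finset Ω)}

lemma count_five (hS : IsSteinerSystem_5_8_24 S) (A : Finset Ω) (hA : A.card = 5) :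
    (S.filter fun K => A ⊆ K).card = 1 := by
  obtain ⟨K, hK, huniq⟩ := hS.2.2 A hA
  rw [Finset.card_eq_one]
  refine ⟨K, Finset.eq_singleton_iff_unique_mem.2 ⟨?_, ?_⟩⟩
  · exact Finset.mem_filter.2 ⟨hK.1, hK.2⟩
  · intro L hL
    exact huniq L (by simpa [Finset.mem_filter] using hL)

lemma double_count (hS : IsSteinerSystem_5_8_24 S) (A : Finset Ω) :
    (S.filter fun K => A ⊆ K).card * (8 - A.card) =
      ∑ x ∈ Aᶜ, (S.filter fun K => insert x A ⊆ K).card := by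
  classical
  have h1 : ∀ K ∈ S.filter (fun K => A ⊆ K), (K \ A).card = 8 - A.card := by
    intro K hK
    simp only [Finset.mem_filter] at hK
    rw [Finset.card_sdiff_of_subset hK.2, hS.2.1 K hK.1]
  calc (S.filter fun K => A ⊆ K).card * (8 - A.card)
      = ∑ K ∈ S.filter (fun K => A ⊆ K), (K \ A).card :=
        (Finset.sum_const_nat h1).symm
    _ = ∑ K ∈ S.filter (fun K => A ⊆ K), ∑ x ∈ Aᶜ, (if x ∈ K then 1 else 0) := by
        refine Finset.sum_congr rfl fun K _ => ?_
        rw [← Finset.card_filter]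
        congr 1
        ext x
        simp [Finset.mem_sdiff, and_comm]
    _ = ∑ x ∈ Aᶜ, ∑ K ∈ S.filter (fun K => A ⊆ K), (if x ∈ K then 1 else 0) :=
        Finset.sum_comm
    _ = ∑ x ∈ Aᶜ, (S.filter fun K => insert x A ⊆ K).card := by
        refine Finset.sum_congr rfl fun x hx => ?_
        rw [← Finset.card_filter, Finset.filter_filter]
        congr 1
        apply Finset.filter_congr
        intro K _
        rw [Finset.insert_subset_iff]
        tauto

lemma count_lam (hS : IsSteinerSystem_5_8_24 S) :
    ∀ j, j ≤ 5 → ∀ A : Finset Ω, A.card = 5 - j →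
      (S.filter fun K => A ⊆ K).card = lam (5 - j) := by
  intro j
  induction j with
  | zero =>
    intro _ A hA
    simpa [lam] using count_five hS A (by simpa using hA)
  | succ j ih =>
    intro hj A hA
    have hj5 : j ≤ 5 := Nat.le_of_succ_le hj
    have hdc := double_count hS A
    have hAc : Aᶜ.card = 24 - A.card := by
      rw [Finset.card_compl, hS.1]
    have hsum : ∀ x ∈ Aᶜ, (S.filter fun K => insert x A ⊆ K).card = lam (5 - j) := by
      intro x hx
      apply ih hj5
      rw [Finset.card_insert_of_notMem (by simpa using hx), hA]
      omega
    rw [Finset.sum_const_nat hsum, hAc, hA] at hdc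
    have hj4 : j ≤ 4 := by omega
    interval_cases j <;> simp only [lam, Nat.sub_zero] at hdc ⊢ <;> omega

lemma count_card (hS : IsSteinerSystem_5_8_24 S) (A : Finset Ω) (i : ℕ) (hi : i ≤ 5)
    (hA : A.card = i) : (S.filter fun K => A ⊆ K).card = lam i := by
  have h5 : 5 - (5 - i) = i := by omega
  have := count_lam hS (5 - i) (by omega) A (by rw [hA, h5])
  rwa [h5] at this

/-- Count octads containing `A` and avoiding `y`. -/
lemma count_avoid (hS : IsSteinerSystem_5_8_24 S) (A : Finset Ω) (i : ℕ) (hi : i ≤ 4)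
    (hA : A.card = i) (y : Ω) (hy : y ∉ A) :
    (S.filter fun K => A ⊆ K ∧ y ∉ K).card = lam i - lam (i + 1) := by
  classical
  have h := count_card hS A i (by omega) hA
  have h' := count_card hS (insert y A) (i + 1) (by omega)
    (by rw [Finset.card_insert_of_notMem hy, hA])
  have hsplit := Finset.card_filter_add_card_filter_not
    (s := S.filter fun K => A ⊆ K) (p := fun K => y ∈ K)
  have e1 : (S.filter fun K => A ⊆ K).filter (fun K => y ∈ K)
      = S.filter fun K => insert y A ⊆ K := by
    rw [Finset.filter_filter]
    apply Finset.filter_congr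
    intro K _
    rw [Finset.insert_subset_iff]
    tauto
  have e2 : (S.filter fun K => A ⊆ K).filter (fun K => ¬ y ∈ K)
      = S.filter fun K => A ⊆ K ∧ y ∉ K := by
    rw [Finset.filter_filter]
  rw [e1, e2, h', h] at hsplit
  omega

lemma inter_le_four (hS : IsSteinerSystem_5_8_24 S) {K K' : Finset Ω}
    (hK : K ∈ S) (hK' : K' ∈ S) (hne : K ≠ K') : (K ∩ K').card ≤ 4 := by
  by_contra h
  push_neg at h
  obtain ⟨A, hAsub, hAcard⟩ := Finset.exists_subset_card_eq (show 5 ≤ (K ∩ K').card by omega)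
  obtain ⟨L, _, huniq⟩ := hS.2.2 A hAcard
  exact hne (((huniq K ⟨hK, hAsub.trans (Finset.inter_subset_left)⟩)).trans
    (huniq K' ⟨hK', hAsub.trans (Finset.inter_subset_right)⟩).symm)

lemma moment (hS : IsSteinerSystem_5_8_24 S) (K₀ : Finset Ω) (hK₀ : K₀ ∈ S)
    (d : ℕ) (hd : d ≤ 4) :
    ∑ K ∈ S.erase K₀, ((K ∩ K₀).card).choose d = Nat.choose 8 d * (lam d - 1) := by
  classical
  have h8 : K₀.card = 8 := hS.2.1 K₀ hK₀
  have h1 : ∀ K : Finset Ω, ((K ∩ K₀).card).choose d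
      = ∑ D ∈ K₀.powersetCard d, (if D ⊆ K then 1 else 0) := by
    intro K
    rw [← Finset.card_filter, ← Finset.card_powersetCard]
    congr 1
    ext D
    simp only [Finset.mem_powersetCard, Finset.mem_filter, Finset.subset_inter_iff]
    tauto
  calc ∑ K ∈ S.erase K₀, ((K ∩ K₀).card).choose d
      = ∑ K ∈ S.erase K₀, ∑ D ∈ K₀.powersetCard d, (if D ⊆ K then 1 else 0) :=
        Finset.sum_congr rfl fun K _ => h1 K
    _ = ∑ D ∈ K₀.powersetCard d, ∑ K ∈ S.erase K₀, (if D ⊆ K then 1 else 0) :=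
        Finset.sum_comm
    _ = Nat.choose 8 d * (lam d - 1) := by
        rw [Finset.sum_const_nat (m := lam d - 1), Finset.card_powersetCard, h8]
        intro D hD
        rw [← Finset.card_filter]
        simp only [Finset.mem_powersetCard] at hD
        have hDcard := count_card hS D d (by omega) hD.2
        have heq : (S.erase K₀).filter (fun K => D ⊆ K)
            = (S.filter fun K => D ⊆ K).erase K₀ := by
          ext K
          simp only [Finset.mem_erase, Finset.mem_filter]
          tauto
        rw [heq, Finset.card_erase_of_mem
          (Finset.mem_filter.2 ⟨hK₀, hD.1⟩), hDcard]

lemma no_odd (hS : IsSteinerSystem_5_8_24 S) (K₀ : Finset Ω) (hK₀ : K₀ ∈ S)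
    {K : Finset Ω} (hK : K ∈ S) (hne : K ≠ K₀) :
    (K ∩ K₀).card = 0 ∨ (K ∩ K₀).card = 2 ∨ (K ∩ K₀).card = 4 := by
  classical
  set a : ℕ → ℕ := fun i => ((S.erase K₀).filter fun K => (K ∩ K₀).card = i).card with ha
  have hmap : ∀ L ∈ S.erase K₀, (L ∩ K₀).card ∈ Finset.range 5 := by
    intro L hL
    simp only [Finset.mem_erase] at hL
    simpa [Finset.mem_range, Nat.lt_succ_iff] using inter_le_four hS hL.2 hK₀ hL.1
  have key : ∀ d, d ≤ 4 →
      ∑ i ∈ Finset.range 5, a i * Nat.choose i d = Nat.choose 8 d * (lam d - 1) := by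
    intro d hd
    rw [← moment hS K₀ hK₀ d hd,
      ← Finset.sum_fiberwise_of_maps_to hmap (fun L => ((L ∩ K₀).card).choose d)]
    refine Finset.sum_congr rfl fun i _ => ?_
    rw [Finset.sum_const_nat (m := Nat.choose i d)]
    intro L hL
    rw [(Finset.mem_filter.1 hL).2]
  have e0 := key 0 (by norm_num)
  have e1 := key 1 (by norm_num)
  have e2 := key 2 (by norm_num)
  have e3 := key 3 (by norm_num)
  have e4 := key 4 (by norm_num)
  simp only [Finset.sum_range_succ, Finset.sum_range_zero, lam] at e0 e1 e2 e3 e4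
  norm_num [Nat.choose] at e0 e1 e2 e3 e4
  have hK' : K ∈ S.erase K₀ := Finset.mem_erase.2 ⟨hne, hK⟩
  have hle : (K ∩ K₀).card ≤ 4 := inter_le_four hS hK hK₀ hne
  by_contra hcon
  push_neg at hcon
  have h13 : (K ∩ K₀).card = 1 ∨ (K ∩ K₀).card = 3 := by omega
  rcases h13 with h | h
  · have : 0 < a 1 := Finset.card_pos.2 ⟨K, Finset.mem_filter.2 ⟨hK', h⟩⟩
    omega
  · have : 0 < a 3 := Finset.card_pos.2 ⟨K, Finset.mem_filter.2 ⟨hK', h⟩⟩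
    omega

end SteinerAux5824

open SteinerAux5824 in
theorem count_octads_E7_x {Ω : Type*} [Fintype Ω] [DecidableEq Ω]
    (S : Finset (Finset Ω)) (hS : IsSteinerSystem_5_8_24 S)
    (pinf p0 p1 : Ω) (h01 : p0 ≠ p1) (hinf0 : pinf ≠ p0) (hinf1 : pinf ≠ p1)
    (K₀ : Finset Ω) (hK₀S : K₀ ∈ S)
    (h0K : p0 ∈ K₀) (hinfK : pinf ∉ K₀) (h1K : p1 ∉ K₀) :
    (S.filter fun K => p0 ∈ K ∧ p1 ∈ K ∧ pinf ∉ K ∧ (K ∩ K₀).card = 2).card = 28 := by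
  classical
  set F : Finset (Finset Ω) := S.filter fun K => p0 ∈ K ∧ p1 ∈ K ∧ pinf ∉ K with hF
  -- |F| = 56
  have hp01card : ({p0, p1} : Finset Ω).card = 2 := by
    rw [Finset.card_insert_of_notMem (by simp [h01]), Finset.card_singleton]
  have hF56 : F.card = 56 := by
    have hFeq : F = S.filter fun K => ({p0, p1} : Finset Ω) ⊆ K ∧ pinf ∉ K := by
      apply Finset.filter_congr
      intro K _
      simp [Finset.insert_subset_iff]
      tauto
    rw [hFeq, count_avoid hS _ 2 (by norm_num) hp01card pinf
      (by simp only [Finset.mem_insert, Finset.mem_singleton, not_or]; exact ⟨hinf0, hinf1⟩)]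
    rfl
  -- weighted sum: ∑_{K ∈ F} |K ∩ K₀| = 168
  have hsum : ∑ K ∈ F, (K ∩ K₀).card = 168 := by
    have h1 : ∀ K : Finset Ω, (K ∩ K₀).card = ∑ x ∈ K₀, (if x ∈ K then 1 else 0) := by
      intro K
      rw [← Finset.card_filter]
      congr 1
      ext x
      simp [Finset.mem_inter, and_comm]
    rw [Finset.sum_congr rfl fun K _ => h1 K, Finset.sum_comm]
    have hcards : ∀ x ∈ K₀, ∑ K ∈ F, (if x ∈ K then 1 else 0)
        = (F.filter fun K => x ∈ K).card := by
      intro x _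
      rw [Finset.card_filter]
    rw [Finset.sum_congr rfl hcards, ← Finset.add_sum_erase _ _ h0K]
    have hterm0 : (F.filter fun K => p0 ∈ K).card = 56 := by
      rw [Finset.filter_eq_self.2 (fun K hK => (Finset.mem_filter.1 hK).2.1)]
      exact hF56
    have hterm : ∀ x ∈ K₀.erase p0, (F.filter fun K => x ∈ K).card = 16 := by
      intro x hx
      simp only [Finset.mem_erase] at hx
      have hx1 : x ≠ p1 := fun h => h1K (h ▸ hx.2)
      have hxinf : x ≠ pinf := fun h => hinfK (h ▸ hx.2)
      have hcard3 : (insert x {p0, p1} : Finset Ω).card = 3 := by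
        rw [Finset.card_insert_of_notMem (by simp [hx.1, hx1]), hp01card]
      have heq : F.filter (fun K => x ∈ K)
          = S.filter fun K => (insert x {p0, p1} : Finset Ω) ⊆ K ∧ pinf ∉ K := by
        rw [hF, Finset.filter_filter]
        apply Finset.filter_congr
        intro K _
        simp [Finset.insert_subset_iff]
        tauto
      rw [heq, count_avoid hS _ 3 (by norm_num) hcard3 pinf
        (by simp only [Finset.mem_insert, Finset.mem_singleton, not_or]; exact ⟨Ne.symm hxinf, hinf0, hinf1⟩)]
      rfl
    rw [hterm0, Finset.sum_const_nat hterm, Finset.card_erase_of_mem h0K,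
      hS.2.1 K₀ hK₀S]
  -- every K in F meets K₀ in 2 or 4 points
  have hmem : ∀ K ∈ F, (K ∩ K₀).card = 2 ∨ (K ∩ K₀).card = 4 := by
    intro K hKF
    rw [hF, Finset.mem_filter] at hKF
    have hne : K ≠ K₀ := fun h => h1K (h ▸ hKF.2.2.1)
    have hodd := no_odd hS K₀ hK₀S hKF.1 hne
    have hpos : 0 < (K ∩ K₀).card :=
      Finset.card_pos.2 ⟨p0, Finset.mem_inter.2 ⟨hKF.2.1, h0K⟩⟩
    omega
  -- split and solve
  have hsplit := Finset.card_filter_add_card_filter_not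
    (s := F) (p := fun K => (K ∩ K₀).card = 2)
  have hsum2 := Finset.sum_filter_add_sum_filter_not F (fun K => (K ∩ K₀).card = 2)
    (fun K => (K ∩ K₀).card)
  have hB : ∑ K ∈ F.filter (fun K => (K ∩ K₀).card = 2), (K ∩ K₀).card
      = (F.filter fun K => (K ∩ K₀).card = 2).card * 2 :=
    Finset.sum_const_nat fun K hK => (Finset.mem_filter.1 hK).2
  have hC : ∑ K ∈ F.filter (fun K => ¬ (K ∩ K₀).card = 2), (K ∩ K₀).card
      = (F.filter fun K => ¬ (K ∩ K₀).card = 2).card * 4 := by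
    apply Finset.sum_const_nat
    intro K hK
    have hK' := Finset.mem_filter.1 hK
    have := hmem K hK'.1
    omega
  have htarget : (S.filter fun K => p0 ∈ K ∧ p1 ∈ K ∧ pinf ∉ K ∧ (K ∩ K₀).card = 2)
      = F.filter (fun K => (K ∩ K₀).card = 2) := by
    rw [hF, Finset.filter_filter]
    apply Finset.filter_congr
    intro K _
    tauto
  rw [htarget]
  rw [hB, hC, hsum] at hsum2
  omega
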